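/- Let ℓ ≥ 1 be an integer and x₀ ∈ ℝ³. Let v : ℝ³ → ℝ³ be given by v(x) = p(x) + (x − x₀) × z(x), where p and z are polynomial vector fields on ℝ³ whose components have total degree at most ℓ−1 (so that v belongs to the Nédélec space NE^ℓ built from the Koszul complement at x₀). Let ν ∈ ℝ³, x_F ∈ ℝ³, and let F = {x ∈ ℝ³ : ⟨x − x_F, ν⟩ = 0} be the corresponding plane. Then there exist a polynomial vector field a : ℝ³ → ℝ³ whose components have total degree at most ℓ−1 and which satisfies ⟨a(x), ν⟩ = 0 for all x ∈ ℝ³, and a real polynomial b of total degree at most ℓ−1, such that v(x) × ν = a(x) + b(x)(x − x_F) for all x ∈ F; i.e., the rotated tangential trace of a Nédélec field on a plane belongs to the planar Raviart–Thomas space RT^ℓ with base point x_F. -/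

import Mathlib

open MvPolynomial
open scoped InnerProductSpace

/-- The cross product of two vectors of `ℝ³` (as elements of `EuclideanSpace ℝ (Fin 3)`). -/
noncomputable def crossVec (a b : EuclideanSpace ℝ (Fin 3)) : EuclideanSpace ℝ (Fin 3) :=
  (WithLp.equiv 2 (Fin 3 → ℝ)).symm
    ![a 1 * b 2 - a 2 * b 1, a 2 * b 0 - a 0 * b 2, a 0 * b 1 - a 1 * b 0]

/-- Evaluation of a polynomial vector field at a point of `ℝ³`. -/
noncomputable def polyVecEval (p : Fin 3 → MvPolynomial (Fin 3) ℝ)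
    (x : EuclideanSpace ℝ (Fin 3)) : EuclideanSpace ℝ (Fin 3) :=
  (WithLp.equiv 2 (Fin 3 → ℝ)).symm fun i => eval (fun j => x j) (p i)

private lemma degCmul {r : ℝ} {q : MvPolynomial (Fin 3) ℝ} {n : ℕ}
    (h : q.totalDegree ≤ n) : (C r * q).totalDegree ≤ n := by
  rw [← smul_eq_C_mul]
  exact (totalDegree_smul_le r q).trans h

/-- The rotated tangential trace of a Nédélec field on a plane belongs to the
planar Raviart–Thomas space: if `v(x) = p(x) + (x − x₀) × z(x)` with `p`, `z` of component
degree `≤ ℓ−1`, and `F = {x : ⟨x − x_F, ν⟩ = 0}`, then there are a polynomial vector field `a`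
of component degree `≤ ℓ−1` that is everywhere orthogonal to `ν` and a polynomial `b` of total
degree `≤ ℓ−1` such that `v(x) × ν = a(x) + b(x)(x − x_F)` for all `x ∈ F`. -/
theorem nedelec_rotated_tangential_trace_on_plane (ℓ : ℕ) (hℓ : 1 ≤ ℓ)
    (x₀ : EuclideanSpace ℝ (Fin 3))
    (p z : Fin 3 → MvPolynomial (Fin 3) ℝ)
    (hp : ∀ i, (p i).totalDegree ≤ ℓ - 1) (hz : ∀ i, (z i).totalDegree ≤ ℓ - 1)
    (ν xF : EuclideanSpace ℝ (Fin 3)) :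
    ∃ a : Fin 3 → MvPolynomial (Fin 3) ℝ, ∃ b : MvPolynomial (Fin 3) ℝ,
      (∀ i, (a i).totalDegree ≤ ℓ - 1) ∧
      (∀ x : EuclideanSpace ℝ (Fin 3), ⟪polyVecEval a x, ν⟫_ℝ = 0) ∧
      b.totalDegree ≤ ℓ - 1 ∧
      ∀ x : EuclideanSpace ℝ (Fin 3), ⟪x - xF, ν⟫_ℝ = 0 →
        crossVec (polyVecEval p x + crossVec (x - x₀) (polyVecEval z x)) ν
          = polyVecEval a x + (eval (fun j => x j) b) • (x - xF) := by
  set d : Fin 3 → ℝ := fun i => xF i - x₀ i with hd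
  set c : ℝ := ν 0 * d 0 + ν 1 * d 1 + ν 2 * d 2 with hc
  set zν : MvPolynomial (Fin 3) ℝ := C (ν 0) * z 0 + C (ν 1) * z 1 + C (ν 2) * z 2 with hzν
  refine ⟨![C (ν 2) * p 1 - C (ν 1) * p 2 + C c * z 0 - C (d 0) * zν,
            C (ν 0) * p 2 - C (ν 2) * p 0 + C c * z 1 - C (d 1) * zν,
            C (ν 1) * p 0 - C (ν 0) * p 1 + C c * z 2 - C (d 2) * zν],
          -zν, ?_, ?_, ?_, ?_⟩
  · have hzνdeg : zν.totalDegree ≤ ℓ - 1 := by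
      refine (totalDegree_add _ _).trans (max_le ((totalDegree_add _ _).trans
        (max_le (degCmul (hz 0)) (degCmul (hz 1)))) (degCmul (hz 2)))
    intro i
    fin_cases i <;>
    · simp only [Matrix.cons_val_zero, Matrix.cons_val_one, Matrix.head_cons,
        Matrix.cons_val_two, Matrix.tail_cons]
      refine (totalDegree_sub _ _).trans (max_le ((totalDegree_add _ _).trans
        (max_le ((totalDegree_sub _ _).trans (max_le (degCmul (hp _)) (degCmul (hp _))))
          (degCmul (hz _)))) (degCmul hzνdeg))
  · intro x
    simp only [polyVecEval, PiLp.inner_apply, RCLike.inner_apply, WithLp.equiv_symm_apply, PiLp.toLp_apply,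
      Fin.sum_univ_three, Matrix.cons_val_zero, Matrix.cons_val_one, Matrix.head_cons,
      Matrix.cons_val_two, Matrix.tail_cons, map_add, map_sub, map_mul, eval_C, hzν, hc,
      conj_trivial]
    ring
  · have hzνdeg : zν.totalDegree ≤ ℓ - 1 := by
      refine (totalDegree_add _ _).trans (max_le ((totalDegree_add _ _).trans
        (max_le (degCmul (hz 0)) (degCmul (hz 1)))) (degCmul (hz 2)))
    simpa [totalDegree_neg] using hzνdeg
  · intro x hx
    simp only [PiLp.inner_apply, RCLike.inner_apply, Fin.sum_univ_three, PiLp.sub_apply,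
      conj_trivial] at hx
    ext i
    fin_cases i <;>
    · simp only [crossVec, polyVecEval, WithLp.equiv_symm_apply, PiLp.toLp_apply, PiLp.add_apply,
        PiLp.sub_apply, PiLp.smul_apply, Matrix.cons_val_zero, Matrix.cons_val_one,
        Matrix.head_cons, Matrix.cons_val_two, Matrix.tail_cons, map_add, map_sub, map_mul,
        map_neg, eval_C, hzν, hc, hd, smul_eq_mul, Fin.zero_eta, Fin.mk_one, Fin.reduceFinMk]
      first
      | linear_combination (eval (fun j => x j) (z 0)) * hx
      | linear_combination (eval (fun j => x j) (z 1)) * hx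
      | linear_combination (eval (fun j => x j) (z 2)) * hx
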